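/- For a finite-dimensional Hopf *-algebra H, the canonical quasitriangular structure R = Σ_a (f^a⊗1) ⊗ (1⊗e_a) of the quantum double D(H) (where {e_a} is a basis of H and {f^a} the dual basis) is antireal: R^{*⊗*} = R⁻¹. -/

import Mathlib

open scoped TensorProduct

/-- Interpret a list of pairs as a sum of pure tensors (Sweedler representation). -/
noncomputable def toT {A : Type} [AddCommMonoid A] [Module ℂ A] (l : List (A × A)) :
    A ⊗[ℂ] A := (l.map fun p => p.1 ⊗ₜ[ℂ] p.2).sum

/-- A threefold Sweedler representation `(x₍₁₎, x₍₂₎, x₍₃₎)` obtained by iterating `ρ`. -/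
def tri {A : Type} (ρ : A → List (A × A)) (x : A) : List (A × A × A) :=
  (ρ x).flatMap fun p => (ρ p.2).map fun q => (p.1, q.1, q.2)

set_option maxHeartbeats 2000000 in
/-- For a finite-dimensional Hopf *-algebra `H`, the canonical
quasitriangular structure `R = Σ_a (fᵃ ⊗ 1) ⊗ (1 ⊗ e_a)` of the quantum double `D(H)`
(where `{e_a}` is a basis of `H` and `{fᵃ}` the dual basis) is antireal: applying the
*-structure of `D(H)` (namely `(a⊗1)* = (S²a)*⊗1`, `(1⊗h)* = 1⊗h*`) in both tensor
factors gives `R^{*⊗*} = R⁻¹`, where `R⁻¹ = (S_D ⊗ id)(R)` and the antipode of `D(H)`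
restricts to `S⁻¹` on the factor `A = H^{*op}`. -/
theorem quantum_double_R_antireal {ι : Type} [Fintype ι] [DecidableEq ι]
    {H A : Type} [Ring H] [HopfAlgebra ℂ H] [StarRing H] [StarModule ℂ H]
    [Ring A] [HopfAlgebra ℂ A] [StarRing A] [StarModule ℂ A]
    (ρH : H → List (H × H)) (ρA : A → List (A × A))
    (hρH : ∀ x, Coalgebra.comul (R := ℂ) x = toT (ρH x))
    (hρA : ∀ x, Coalgebra.comul (R := ℂ) x = toT (ρA x))
    -- Hopf *-algebra axioms for H
    (hcomulStarH : ∀ x : H, Coalgebra.comul (R := ℂ) (star x)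
        = toT ((ρH x).map fun p => (star p.1, star p.2)))
    (hcounitStarH : ∀ x : H, Coalgebra.counit (R := ℂ) (star x)
        = star (Coalgebra.counit (R := ℂ) (A := H) x))
    (hSstarH : ∀ x : H, HopfAlgebra.antipode (R := ℂ)
        (star (HopfAlgebra.antipode (R := ℂ) (star x))) = x)
    -- Hopf *-algebra axioms for A
    (hcomulStarA : ∀ x : A, Coalgebra.comul (R := ℂ) (star x)
        = toT ((ρA x).map fun p => (star p.1, star p.2)))
    (hcounitStarA : ∀ x : A, Coalgebra.counit (R := ℂ) (star x)
        = star (Coalgebra.counit (R := ℂ) (A := A) x))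
    (hSstarA : ∀ x : A, HopfAlgebra.antipode (R := ℂ)
        (star (HopfAlgebra.antipode (R := ℂ) (star x))) = x)
    -- the Hopf algebra duality pairing ⟨·,·⟩ : H × A → ℂ, nondegenerate
    (pair : H →ₗ[ℂ] A →ₗ[ℂ] ℂ)
    (hpairMulA : ∀ (h : H) (a b : A),
        pair h (a * b) = ((ρH h).map fun q => pair q.1 a * pair q.2 b).sum)
    (hpairMulH : ∀ (g h : H) (a : A),
        pair (g * h) a = ((ρA a).map fun p => pair g p.1 * pair h p.2).sum)
    (hpairOneA : ∀ h : H, pair h 1 = Coalgebra.counit (R := ℂ) h)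
    (hpairOneH : ∀ a : A, pair 1 a = Coalgebra.counit (R := ℂ) a)
    (hpairS : ∀ (h : H) (a : A),
        pair (HopfAlgebra.antipode (R := ℂ) h) a
          = pair h (HopfAlgebra.antipode (R := ℂ) a))
    (hpairStar : ∀ (h : H) (a : A), pair (star h) a
        = (starRingEnd ℂ) (pair h (star (HopfAlgebra.antipode (R := ℂ) a))))
    (hndH : ∀ h : H, (∀ a : A, pair h a = 0) → h = 0)
    (hndA : ∀ a : A, (∀ h : H, pair h a = 0) → a = 0)
    -- the inverse of the antipode of `A`
    (SAinv : A → A)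
    (hSAinv1 : ∀ a : A, SAinv (HopfAlgebra.antipode (R := ℂ) a) = a)
    (hSAinv2 : ∀ a : A, HopfAlgebra.antipode (R := ℂ) (SAinv a) = a)
    -- a basis `{e_a}` of `H` with dual basis `{fᵃ}` in `A`
    (e : Module.Basis ι ℂ H) (f : ι → A)
    (hdual : ∀ i j : ι, pair (e i) (f j) = if i = j then (1 : ℂ) else 0) :
    -- `R^{*⊗*} = (S_D ⊗ id)(R) = R⁻¹` in `D(H) ⊗ D(H)`, with
    -- `(fᵢ ⊗ 1)* = (S² fᵢ)* ⊗ 1` and `(1 ⊗ eᵢ)* = 1 ⊗ eᵢ*`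
    (∑ i : ι,
        (((star (HopfAlgebra.antipode (R := ℂ) (HopfAlgebra.antipode (R := ℂ) (f i)))
            ⊗ₜ[ℂ] (1 : H)) ⊗ₜ[ℂ] ((1 : A) ⊗ₜ[ℂ] star (e i)))
          : (A ⊗[ℂ] H) ⊗[ℂ] (A ⊗[ℂ] H)))
      = ∑ i : ι,
        ((SAinv (f i) ⊗ₜ[ℂ] (1 : H)) ⊗ₜ[ℂ] ((1 : A) ⊗ₜ[ℂ] e i)) := by
  classical
  have hrepr : ∀ (h : H) (i : ι), pair h (f i) = e.repr h i := by
    intro h i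
    conv_lhs => rw [← e.sum_repr h]
    simp [map_sum, map_smul, hdual, Finset.sum_ite_eq', smul_eq_mul, -Module.Basis.sum_repr]
  have hstar_pair : ∀ (g : H) (i : ι),
      pair g (star (HopfAlgebra.antipode (R := ℂ) (HopfAlgebra.antipode (R := ℂ) (f i))))
        = (starRingEnd ℂ) (pair (HopfAlgebra.antipode (R := ℂ) (star g)) (f i)) := by
    intro g i
    have h1 := hpairStar g (HopfAlgebra.antipode (R := ℂ) (f i))
    have h2 := hpairS (star g) (f i)
    rw [h2, h1, starRingEnd_apply, starRingEnd_apply, star_star]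
  have hcol : ∀ j : ι,
      (∑ i : ι, e.repr (star (e i)) j •
          star (HopfAlgebra.antipode (R := ℂ) (HopfAlgebra.antipode (R := ℂ) (f i))))
        = SAinv (f j) := by
    intro j
    have hz : ∀ g : H, pair g
        ((∑ i : ι, e.repr (star (e i)) j •
            star (HopfAlgebra.antipode (R := ℂ) (HopfAlgebra.antipode (R := ℂ) (f i))))
          - SAinv (f j)) = 0 := by
      intro g
      rw [map_sub, map_sum]
      set g' : H := HopfAlgebra.antipode (R := ℂ) (star g) with hg'
      have hL : (∑ i : ι, (pair g) (e.repr (star (e i)) j •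
          star (HopfAlgebra.antipode (R := ℂ) (HopfAlgebra.antipode (R := ℂ) (f i)))))
            = pair (star g') (f j) := by
        have hsg' : star g' = ∑ i : ι, (starRingEnd ℂ) (e.repr g' i) • star (e i) := by
          conv_lhs => rw [← e.sum_repr g']
          rw [star_sum]
          refine Finset.sum_congr rfl fun i _ => ?_
          rw [star_smul, starRingEnd_apply]
        rw [hsg']
        simp only [map_sum, map_smul, LinearMap.sum_apply, LinearMap.smul_apply, smul_eq_mul]
        refine Finset.sum_congr rfl fun i _ => ?_
        rw [hstar_pair g i, hrepr, hrepr, mul_comm]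
      have hR : pair g (SAinv (f j)) = pair (star g') (f j) := by
        have hgg : HopfAlgebra.antipode (R := ℂ) (star g') = g := hSstarH g
        conv_lhs => rw [← hgg]
        rw [hpairS, hSAinv2]
      rw [hL, hR, sub_self]
    exact sub_eq_zero.mp (hndA _ hz)
  -- the key identity in A ⊗ H
  have key : (∑ i : ι,
      star (HopfAlgebra.antipode (R := ℂ) (HopfAlgebra.antipode (R := ℂ) (f i)))
        ⊗ₜ[ℂ] star (e i))
      = ∑ i : ι, SAinv (f i) ⊗ₜ[ℂ] (e i : H) := by
    calc (∑ i : ι,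
        star (HopfAlgebra.antipode (R := ℂ) (HopfAlgebra.antipode (R := ℂ) (f i)))
          ⊗ₜ[ℂ] star (e i))
        = ∑ i : ι, ∑ j : ι, (e.repr (star (e i)) j •
            star (HopfAlgebra.antipode (R := ℂ) (HopfAlgebra.antipode (R := ℂ) (f i))))
              ⊗ₜ[ℂ] (e j : H) := by
          refine Finset.sum_congr rfl fun i _ => ?_
          conv_lhs => rw [← e.sum_repr (star (e i))]
          rw [TensorProduct.tmul_sum]
          refine Finset.sum_congr rfl fun j _ => ?_
          rw [TensorProduct.tmul_smul, TensorProduct.smul_tmul']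
      _ = ∑ j : ι, (∑ i : ι, e.repr (star (e i)) j •
            star (HopfAlgebra.antipode (R := ℂ) (HopfAlgebra.antipode (R := ℂ) (f i))))
              ⊗ₜ[ℂ] (e j : H) := by
          rw [Finset.sum_comm]
          refine Finset.sum_congr rfl fun j _ => ?_
          rw [TensorProduct.sum_tmul]
      _ = ∑ j : ι, SAinv (f j) ⊗ₜ[ℂ] (e j : H) := by
          refine Finset.sum_congr rfl fun j _ => ?_
          rw [hcol j]
  -- transport along the linear map a ⊗ h ↦ (a ⊗ 1) ⊗ (1 ⊗ h)
  let L : A ⊗[ℂ] H →ₗ[ℂ] (A ⊗[ℂ] H) ⊗[ℂ] (A ⊗[ℂ] H) :=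
    TensorProduct.map ((TensorProduct.mk ℂ A H).flip (1 : H))
      (TensorProduct.mk ℂ A H (1 : A))
  have hLsum : ∀ (l : ι → A) (r : ι → H),
      L (∑ i : ι, l i ⊗ₜ[ℂ] r i) = ∑ i : ι, (l i ⊗ₜ[ℂ] (1 : H)) ⊗ₜ[ℂ] ((1 : A) ⊗ₜ[ℂ] r i) := by
    intro l r
    rw [map_sum]
    rfl
  have := congrArg L key
  rw [hLsum, hLsum] at this
  exact this
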